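/- arXiv:1807.09676 — 2 statements merged into one kernel-verified Lean document; each statement's English description precedes it below -/
import Mathlib

section
/- Let n, M be natural numbers, let a : Fin n → ℝ with a(i) > 0 for all i, let V > 0 and t₀ ∈ ℝ. The following are equivalent: (i) there exists an assignment f : Fin n → Fin M such that for every b : Fin M, Σ_{i : f(i) = b} a(i) ≤ V (a bin packing of the items of sizes a(i) into M bins of capacity V); (ii) there exist f : Fin n → Fin M and start times s : Fin n → ℝ such that t₀ ≤ s(i) and s(i) + a(i) ≤ t₀ + V for every i, and for every i ≠ j with f(i) = f(j) the half-open intervals [s(i), s(i)+a(i)) and [s(j), s(j)+a(j)) are disjoint (a non-overlapping schedule of the n jobs on M machines within the time window [t₀, t₀+V]). -/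
open Finset MeasureTheory

/-- Core of the NP-completeness reduction (Theorem 1): packing `n` items of
sizes `a i > 0` into `M` bins of capacity `V` is equivalent to non-overlapping
scheduling of `n` jobs of durations `a i` on `M` machines within the time window
`[t₀, t₀ + V]`. -/
theorem binpacking_iff_schedule (n M : ℕ) (a : Fin n → ℝ) (ha : ∀ i, 0 < a i)
    (V : ℝ) (hV : 0 < V) (t₀ : ℝ) :
    (∃ f : Fin n → Fin M, ∀ b : Fin M,
        ∑ i ∈ Finset.univ.filter fun i => f i = b, a i ≤ V) ↔
    (∃ (f : Fin n → Fin M) (s : Fin n → ℝ),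
        (∀ i, t₀ ≤ s i ∧ s i + a i ≤ t₀ + V) ∧
        ∀ i j, i ≠ j → f i = f j →
          Disjoint (Set.Ico (s i) (s i + a i)) (Set.Ico (s j) (s j + a j))) := by
  constructor
  · rintro ⟨f, hf⟩
    set s : Fin n → ℝ := fun i =>
      t₀ + ∑ j ∈ univ.filter (fun j => f j = f i ∧ j < i), a j with hs
    have key : ∀ i, s i + a i ≤ t₀ + ∑ j ∈ univ.filter (fun j => f j = f i), a j := by
      intro i
      have hsub : insert i (univ.filter (fun j => f j = f i ∧ j < i)) ⊆
          univ.filter (fun j => f j = f i) := by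
        intro j hj
        simp only [mem_insert, mem_filter, mem_univ, true_and] at hj ⊢
        rcases hj with rfl | ⟨h1, _⟩
        · rfl
        · exact h1
      have hni : i ∉ univ.filter (fun j => f j = f i ∧ j < i) := by simp
      have := Finset.sum_le_sum_of_subset_of_nonneg hsub (fun j _ _ => (ha j).le)
      rw [Finset.sum_insert hni] at this
      simp only [hs]
      linarith
    have hmono : ∀ i j : Fin n, i < j → f i = f j → s i + a i ≤ s j := by
      intro i j hij hfij
      have hsub : insert i (univ.filter (fun k => f k = f i ∧ k < i)) ⊆
          univ.filter (fun k => f k = f j ∧ k < j) := by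
        intro k hk
        simp only [mem_insert, mem_filter, mem_univ, true_and] at hk ⊢
        rcases hk with rfl | ⟨h1, h2⟩
        · exact ⟨hfij, hij⟩
        · exact ⟨h1.trans hfij, h2.trans hij⟩
      have hni : i ∉ univ.filter (fun k => f k = f i ∧ k < i) := by simp
      have := Finset.sum_le_sum_of_subset_of_nonneg hsub (fun k _ _ => (ha k).le)
      rw [Finset.sum_insert hni] at this
      simp only [hs]
      linarith
    refine ⟨f, s, ?_, ?_⟩
    · intro i
      refine ⟨?_, (key i).trans (by linarith [hf (f i)])⟩
      have : 0 ≤ ∑ j ∈ univ.filter (fun j => f j = f i ∧ j < i), a j :=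
        Finset.sum_nonneg fun j _ => (ha j).le
      simp only [hs]; linarith
    · intro i j hne hfij
      rcases lt_or_gt_of_ne hne with h | h
      · exact Set.Ico_disjoint_Ico.mpr
          ((min_le_left _ _).trans ((hmono i j h hfij).trans (le_max_right _ _)))
      · exact Set.Ico_disjoint_Ico.mpr
          ((min_le_right _ _).trans ((hmono j i h hfij.symm).trans (le_max_left _ _)))
  · rintro ⟨f, s, hwin, hdisj⟩
    refine ⟨f, fun b => ?_⟩
    set S := univ.filter (fun i => f i = b) with hS
    have hpd : ∀ i ∈ S, ∀ j ∈ S, i ≠ j →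
        Disjoint (Set.Ico (s i) (s i + a i)) (Set.Ico (s j) (s j + a j)) := by
      intro i hi j hj hne
      simp only [hS, mem_filter] at hi hj
      exact hdisj i j hne (hi.2.trans hj.2.symm)
    have hmeas := measure_biUnion_finset (μ := volume)
      (fun i hi j hj hne => hpd i hi j hj hne) (fun i _ => measurableSet_Ico)
    have hsub : (⋃ i ∈ S, Set.Ico (s i) (s i + a i)) ⊆ Set.Ico t₀ (t₀ + V) := by
      intro x hx
      simp only [Set.mem_iUnion] at hx
      obtain ⟨i, _, hx⟩ := hx
      exact ⟨(hwin i).1.trans hx.1, hx.2.trans_le (hwin i).2⟩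
    have hle : ∑ i ∈ S, volume (Set.Ico (s i) (s i + a i)) ≤
        volume (Set.Ico t₀ (t₀ + V)) := hmeas ▸ measure_mono hsub
    simp only [Real.volume_Ico, add_sub_cancel_left] at hle
    have : ENNReal.ofReal (∑ i ∈ S, a i) ≤ ENNReal.ofReal V := by
      rwa [ENNReal.ofReal_sum_of_nonneg (fun i _ => (ha i).le)]
    rwa [ENNReal.ofReal_le_ofReal_iff hV.le] at this
end

section
/- Let J be a finite set of passengers, D a set of destinations, d : J → D, τ : D × ℝ → ℝ a time-dependent travel time from the terminal to each destination (depending on the trip's departure time), a : J → ℝ the mass-transit departure time of each passenger, γ a natural number, G : J → Fin γ an assignment of passengers to groups, and t : Fin γ → ℝ the terminal departure time of each group. Then for any two passengers j', j'' ∈ J with d(j') = d(j''), swapping their group assignments preserves the total travel time: Σ_{j ∈ J} (t(G'(j)) + τ(d(j), t(G'(j))) − a(j)) = Σ_{j ∈ J} (t(G(j)) + τ(d(j), t(G(j))) − a(j)), where G' = G ∘ swap_{j',j''} and swap_{j',j''} is the transposition of j' and j''. -/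
/-- Time-dependent extension of Lemma 1 (used in the proof of Proposition 1):
with time-dependent terminal-to-destination travel times `τ`, swapping the group
assignments of two passengers `j'`, `j''` with a common destination (keeping all
group departure times fixed) preserves the total travel time. -/
theorem swap_preserves_travel_time_time_dependent (J : Type*) [Fintype J]
    [DecidableEq J] (D : Type*) (d : J → D) (τ : D → ℝ → ℝ) (a : J → ℝ)
    (γ : ℕ) (G : J → Fin γ) (t : Fin γ → ℝ)
    (j' j'' : J) (hd : d j' = d j'') :
    (∑ j, (t ((G ∘ Equiv.swap j' j'') j)
        + τ (d j) (t ((G ∘ Equiv.swap j' j'') j)) - a j)) =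
      ∑ j, (t (G j) + τ (d j) (t (G j)) - a j) := by
  have hdσ : ∀ j, d (Equiv.swap j' j'' j) = d j := by
    intro j
    rcases eq_or_ne j j' with rfl | h1
    · simp [hd]
    rcases eq_or_ne j j'' with rfl | h2
    · simp [hd]
    · rw [Equiv.swap_apply_of_ne_of_ne h1 h2]
  calc ∑ j, (t ((G ∘ Equiv.swap j' j'') j)
        + τ (d j) (t ((G ∘ Equiv.swap j' j'') j)) - a j)
      = ∑ j, ((fun k => t (G k) + τ (d k) (t (G k))) ((Equiv.swap j' j'') j))
          - ∑ j, a j := by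
        rw [← Finset.sum_sub_distrib]
        refine Finset.sum_congr rfl fun j _ => ?_
        simp [hdσ j]
    _ = ∑ j, (fun k => t (G k) + τ (d k) (t (G k))) j - ∑ j, a j := by
        exact congrArg (· - ∑ j, a j) (Equiv.sum_comp (Equiv.swap j' j'') (fun k => t (G k) + τ (d k) (t (G k))))
    _ = ∑ j, (t (G j) + τ (d j) (t (G j)) - a j) := by
        rw [← Finset.sum_sub_distrib]
end
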